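/- Let B be a finite nonempty set, R̂_n : B → ℝ and R : B → ℝ functions, z a probability vector on B, λ > 0, and let θ̂_λ be a minimizer over probability vectors θ on B of θ ↦ Σ_β θ(β) R̂_n(β) + λ D_KL(θ, z). Then for every probability vector θ on B with D_KL(θ, z) < ∞: Σ_β θ̂_λ(β) R(β) − Σ_β θ(β) R(β) ≤ (1/λ)·( max_{β ∈ B} |R̂_n(β) − R(β)| )² + 2λ D_KL(θ, z). -/

import Mathlib

open Finset

/-- Kullback–Leibler divergence `Σ_β p(β) log(p(β)/q(β))` between probability vectors on a
finite type (finite-valued formula, with the convention `0 · log 0 = 0`; it agrees with the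
usual KL divergence whenever `p` is absolutely continuous with respect to `q`). -/
noncomputable def klFin {B : Type*} [Fintype B] (p q : B → ℝ) : ℝ :=
  ∑ β, p β * Real.log (p β / q β)

-- derivative helper: f antitone on [b,a] ⊂ (0,1)
lemma pinsker_bin_lt {a b : ℝ} (hb : 0 < b) (hba : b < a) (ha : a < 1) :
    2*(a-b)^2 ≤ a * (Real.log a - Real.log b) + (1-a) * (Real.log (1-a) - Real.log (1-b)) := by
  set f : ℝ → ℝ := fun x => a * (Real.log a - Real.log x)
      + (1-a) * (Real.log (1-a) - Real.log (1-x)) - 2*(a-x)^2 with hf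
  have hsub : Set.Icc b a ⊆ Set.Ioo (0:ℝ) 1 := fun x hx =>
    ⟨lt_of_lt_of_le hb hx.1, lt_of_le_of_lt hx.2 ha⟩
  have hderiv : ∀ x ∈ Set.Ioo (0:ℝ) 1, HasDerivAt f (-a/x + (1-a)/(1-x) + 4*(a-x)) x := by
    intro x hx
    have hx0 : x ≠ 0 := ne_of_gt hx.1
    have hx1 : (1:ℝ) - x ≠ 0 := by have := hx.2; intro h; linarith [sub_eq_zero.mp h]
    have h1 : HasDerivAt (fun x : ℝ => Real.log x) (1/x) x := by
      simpa [one_div] using Real.hasDerivAt_log hx0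
    have h2 : HasDerivAt (fun x : ℝ => Real.log (1-x)) (-(1/(1-x))) x := by
      have hc : HasDerivAt (fun x : ℝ => 1 - x) (-1) x := by
        simpa using ((hasDerivAt_id x).const_sub 1)
      simpa [one_div, neg_div, Function.comp_def] using ((Real.hasDerivAt_log hx1).comp x hc)
    have h3 : HasDerivAt (fun x : ℝ => 2*(a-x)^2) (-(4*(a-x))) x := by
      have hc : HasDerivAt (fun x : ℝ => a - x) (-1) x := by
        simpa using ((hasDerivAt_id x).const_sub a)
      have := (hc.pow 2).const_mul 2
      refine this.congr_deriv ?_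
      ring
    have h4 := (((h1.const_mul a).const_sub (a * Real.log a)).add
      ((h2.const_mul (1-a)).const_sub ((1-a) * Real.log (1-a)))).sub h3
    have hfun : f = fun x => a * Real.log a - a * Real.log x
        + ((1-a) * Real.log (1-a) - (1-a) * Real.log (1-x)) - 2*(a-x)^2 := by
      funext y; simp only [hf]; ring
    rw [hfun]
    refine h4.congr_deriv ?_
    field_simp
    ring
  have hcont : ContinuousOn f (Set.Icc b a) :=
    fun x hx => ((hderiv x (hsub hx)).continuousAt).continuousWithinAt
  have hanti : AntitoneOn f (Set.Icc b a) := by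
    apply antitoneOn_of_deriv_nonpos (convex_Icc b a) hcont
    · intro x hx
      rw [interior_Icc] at hx
      exact ((hderiv x (hsub (Set.Ioo_subset_Icc_self hx))).differentiableAt).differentiableWithinAt
    · intro x hx
      rw [interior_Icc] at hx
      have hx' := hsub (Set.Ioo_subset_Icc_self hx)
      rw [(hderiv x hx').deriv]
      have hx0 : 0 < x := hx'.1
      have hx1 : 0 < 1 - x := by linarith [hx'.2]
      have hxa : x < a := hx.2
      have hnn : 0 ≤ (a - x) * (1 - 4*x*(1-x)) / (x*(1-x)) := by
        apply div_nonneg _ (by positivity)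
        have : 0 ≤ (2*x-1)^2 := sq_nonneg _
        nlinarith
      have key : -a/x + (1-a)/(1-x) + 4*(a-x)
          = -((a - x) * (1 - 4*x*(1-x)) / (x*(1-x))) := by
        field_simp
        ring
      rw [key]
      exact neg_nonpos_of_nonneg hnn
  have hfa : f a = 0 := by simp [hf]
  have := hanti (Set.left_mem_Icc.mpr (le_of_lt hba)) (Set.right_mem_Icc.mpr (le_of_lt hba)) (le_of_lt hba)
  rw [hfa] at this
  simp only [hf] at this
  linarith

lemma pinsker_bin_one {b : ℝ} (hb : 0 < b) (hb1 : b < 1) :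
    2*(1-b)^2 ≤ -Real.log b := by
  set f : ℝ → ℝ := fun x => -Real.log x - 2*(1-x)^2 with hf
  have hderiv : ∀ x ∈ Set.Ioo (0:ℝ) 1, HasDerivAt f (-(1/x) + 4*(1-x)) x := by
    intro x hx
    have hx0 : x ≠ 0 := ne_of_gt hx.1
    have h1 : HasDerivAt (fun x : ℝ => Real.log x) (1/x) x := by
      simpa [one_div] using Real.hasDerivAt_log hx0
    have h3 : HasDerivAt (fun x : ℝ => 2*(1-x)^2) (-(4*(1-x))) x := by
      have hc : HasDerivAt (fun x : ℝ => 1 - x) (-1) x := by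
        simpa using ((hasDerivAt_id x).const_sub 1)
      have := (hc.pow 2).const_mul 2
      refine this.congr_deriv ?_
      ring
    have := (h1.neg).sub h3
    refine this.congr_deriv ?_
    ring
  have hsub : Set.Icc b 1 ⊆ Set.Ioc (0:ℝ) 1 := fun x hx => ⟨lt_of_lt_of_le hb hx.1, hx.2⟩
  have hcont : ContinuousOn f (Set.Icc b 1) := by
    apply ContinuousOn.sub
    · apply ContinuousOn.neg
      apply Real.continuousOn_log.comp (continuousOn_id)
      intro x hx
      exact ne_of_gt (lt_of_lt_of_le hb hx.1)
    · fun_prop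
  have hanti : AntitoneOn f (Set.Icc b 1) := by
    apply antitoneOn_of_deriv_nonpos (convex_Icc b 1) hcont
    · intro x hx
      rw [interior_Icc] at hx
      have hx' : x ∈ Set.Ioo (0:ℝ) 1 := ⟨lt_of_lt_of_le hb (le_of_lt hx.1), hx.2⟩
      exact ((hderiv x hx').differentiableAt).differentiableWithinAt
    · intro x hx
      rw [interior_Icc] at hx
      have hx' : x ∈ Set.Ioo (0:ℝ) 1 := ⟨lt_of_lt_of_le hb (le_of_lt hx.1), hx.2⟩
      rw [(hderiv x hx').deriv]
      have hx0 : 0 < x := hx'.1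
      have hx1 : 0 < 1 - x := by linarith [hx'.2]
      have key : -(1/x) + 4*(1-x) = -((1 - 4*x*(1-x)) / x) := by
        field_simp
        ring
      rw [key]
      apply neg_nonpos_of_nonneg
      apply div_nonneg _ (le_of_lt hx0)
      nlinarith [sq_nonneg (2*x-1)]
  have hf1 : f 1 = 0 := by simp [hf]
  have := hanti (Set.left_mem_Icc.mpr (le_of_lt hb1)) (Set.right_mem_Icc.mpr (le_of_lt hb1)) (le_of_lt hb1)
  rw [hf1] at this
  simp only [hf] at this
  linarith

lemma logSum {B : Type*} [Fintype B] (s : Finset B) (p q : B → ℝ)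
    (hp : ∀ β ∈ s, 0 ≤ p β) (hq : ∀ β ∈ s, 0 ≤ q β)
    (hac : ∀ β ∈ s, q β = 0 → p β = 0) :
    (∑ β ∈ s, p β) * Real.log ((∑ β ∈ s, p β) / (∑ β ∈ s, q β)) ≤
      ∑ β ∈ s, p β * Real.log (p β / q β) := by
  set P := ∑ β ∈ s, p β with hP
  set Q := ∑ β ∈ s, q β with hQ
  rcases eq_or_lt_of_le (Finset.sum_nonneg hp) with h0 | hPpos
  · have hall : ∀ β ∈ s, p β = 0 :=
      (Finset.sum_eq_zero_iff_of_nonneg hp).mp h0.symm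
    rw [show P = 0 from h0.symm, zero_mul]
    apply Finset.sum_nonneg
    intro β hβ
    rw [hall β hβ]
    simp
  · obtain ⟨β₀, hβ₀s, hβ₀⟩ : ∃ β ∈ s, 0 < p β := by
      by_contra h
      push_neg at h
      have : P = 0 := Finset.sum_eq_zero (fun β hβ => le_antisymm (h β hβ) (hp β hβ))
      linarith
    have hq₀ : 0 < q β₀ := by
      rcases lt_or_eq_of_le (hq β₀ hβ₀s) with h | h
      · exact h
      · exact absurd (hac β₀ hβ₀s h.symm) (ne_of_gt hβ₀)
    have hQpos : 0 < Q := by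
      rw [hQ]
      apply Finset.sum_pos' hq ⟨β₀, hβ₀s, hq₀⟩
    have hpt : ∀ β ∈ s, p β * Real.log (P/Q) + (p β - q β * (P/Q)) ≤
        p β * Real.log (p β / q β) := by
      intro β hβ
      rcases eq_or_lt_of_le (hp β hβ) with h0 | hpβ
      · rw [← h0]
        simp only [zero_mul, zero_add, zero_sub, zero_mul]
        have : 0 ≤ q β * (P/Q) := mul_nonneg (hq β hβ) (le_of_lt (div_pos hPpos hQpos))
        linarith
      · have hqβ : 0 < q β := by
          rcases lt_or_eq_of_le (hq β hβ) with h | h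
          · exact h
          · exact absurd (hac β hβ h.symm) (ne_of_gt hpβ)
        have ht : 0 < P * q β / (Q * p β) := by positivity
        have hlog := Real.log_le_sub_one_of_pos ht
        have hsplit : Real.log (p β / q β) = Real.log (P/Q) - Real.log (P * q β / (Q * p β)) := by
          rw [Real.log_div (ne_of_gt hpβ) (ne_of_gt hqβ), Real.log_div (ne_of_gt hPpos) (ne_of_gt hQpos),
            Real.log_div (by positivity) (by positivity),
            Real.log_mul (ne_of_gt hPpos) (ne_of_gt hqβ),
            Real.log_mul (ne_of_gt hQpos) (ne_of_gt hpβ)]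
          ring
        rw [hsplit, mul_sub]
        have ht' : p β * (P * q β / (Q * p β)) = q β * (P/Q) := by
          field_simp
        nlinarith [mul_le_mul_of_nonneg_left hlog (le_of_lt hpβ)]
    calc P * Real.log (P/Q)
        = ∑ β ∈ s, (p β * Real.log (P/Q) + (p β - q β * (P/Q))) := by
          rw [Finset.sum_add_distrib, Finset.sum_sub_distrib, ← Finset.sum_mul,
            ← Finset.sum_mul, ← hP, ← hQ]
          rw [mul_comm Q, div_mul_cancel₀ P (ne_of_gt hQpos)]
          ring
      _ ≤ ∑ β ∈ s, p β * Real.log (p β / q β) := Finset.sum_le_sum hpt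

lemma pinsker_bin {a b : ℝ} (hb : 0 < b) (hba : b < a) (ha : a ≤ 1) :
    2*(a-b)^2 ≤ a * Real.log (a/b) + (1-a) * Real.log ((1-a)/(1-b)) := by
  rcases eq_or_lt_of_le ha with h1 | h1
  · subst h1
    have h := pinsker_bin_one hb hba
    simp only [one_mul, sub_self, zero_mul, add_zero, one_div, Real.log_inv]
    linarith
  · have ha0 : 0 < a := lt_trans hb hba
    have h1b : 0 < 1 - b := by linarith
    have h1a : 0 < 1 - a := by linarith
    rw [Real.log_div (ne_of_gt ha0) (ne_of_gt hb),
      Real.log_div (ne_of_gt h1a) (ne_of_gt h1b)]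
    exact pinsker_bin_lt hb hba h1

lemma pinsker_fin {B : Type*} [Fintype B] (p z : B → ℝ)
    (hp : ∀ β, 0 ≤ p β) (hps : ∑ β, p β = 1)
    (hz : ∀ β, 0 ≤ z β) (hzs : ∑ β, z β = 1)
    (hac : ∀ β, z β = 0 → p β = 0) :
    (∑ β, |p β - z β|)^2 ≤ 2 * klFin p z := by
  classical
  set A : Finset B := Finset.univ.filter (fun β => z β < p β) with hA
  set a := ∑ β ∈ A, p β with ha
  set b := ∑ β ∈ A, z β with hb
  have hsplit : ∀ f : B → ℝ, ∑ β, f β = ∑ β ∈ A, f β + ∑ β ∈ Finset.univ.filter (fun β => ¬ z β < p β), f β :=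
    fun f => (Finset.sum_filter_add_sum_filter_not _ _ _).symm
  have hpA : ∑ β ∈ Finset.univ.filter (fun β => ¬ z β < p β), p β = 1 - a := by
    have := hsplit p; rw [hps] at this; linarith
  have hzA : ∑ β ∈ Finset.univ.filter (fun β => ¬ z β < p β), z β = 1 - b := by
    have := hsplit z; rw [hzs] at this; linarith
  -- L1 norm
  have hL : ∑ β, |p β - z β| = 2*(a-b) := by
    rw [hsplit (fun β => |p β - z β|)]
    have e1 : ∑ β ∈ A, |p β - z β| = a - b := by
      rw [ha, hb, ← Finset.sum_sub_distrib]
      apply Finset.sum_congr rfl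
      intro β hβ
      rw [hA, Finset.mem_filter] at hβ
      rw [abs_of_pos (by linarith [hβ.2])]
    have e2 : ∑ β ∈ Finset.univ.filter (fun β => ¬ z β < p β), |p β - z β|
        = (1-b) - (1-a) := by
      rw [← hzA, ← hpA, ← Finset.sum_sub_distrib]
      apply Finset.sum_congr rfl
      intro β hβ
      rw [Finset.mem_filter] at hβ
      have : p β ≤ z β := le_of_not_gt hβ.2
      rw [abs_of_nonpos (by linarith)]
      ring
    rw [e1, e2]; ring
  have hba : b ≤ a := by
    rw [ha, hb]
    apply Finset.sum_le_sum
    intro β hβ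
    rw [hA, Finset.mem_filter] at hβ
    exact le_of_lt hβ.2
  -- KL lower bound
  have hkl : a * Real.log (a/b) + (1-a) * Real.log ((1-a)/(1-b)) ≤ klFin p z := by
    rw [klFin, hsplit (fun β => p β * Real.log (p β / z β))]
    have g1 := logSum A p z (fun β _ => hp β) (fun β _ => hz β) (fun β _ => hac β)
    have g2 := logSum (Finset.univ.filter (fun β => ¬ z β < p β)) p z
      (fun β _ => hp β) (fun β _ => hz β) (fun β _ => hac β)
    rw [hpA, hzA] at g2
    rw [← ha, ← hb] at g1
    linarith
  rw [hL]
  rcases eq_or_lt_of_le hba with he | hlt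
  · -- a = b
    rw [← he] at hkl ⊢
    have e1 : b * Real.log (b/b) = 0 := by
      rcases eq_or_ne b 0 with h | h
      · rw [h]; ring
      · rw [div_self h, Real.log_one, mul_zero]
    have e2 : (1-b) * Real.log ((1-b)/(1-b)) = 0 := by
      rcases eq_or_ne (1-b) 0 with h | h
      · rw [h]; ring
      · rw [div_self h, Real.log_one, mul_zero]
    rw [e1, e2, zero_add] at hkl
    nlinarith [hkl]
  · have hAne : A.Nonempty := by
      by_contra h
      rw [Finset.not_nonempty_iff_eq_empty] at h
      rw [ha, hb, h] at hlt
      simp at hlt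
    have hbpos : 0 < b := by
      rw [hb]
      apply Finset.sum_pos _ hAne
      intro β hβ
      rw [hA, Finset.mem_filter] at hβ
      have hpβ : 0 < p β := lt_of_le_of_lt (hz β) hβ.2
      rcases eq_or_lt_of_le (hz β) with h | h
      · exact absurd (hac β h.symm) (ne_of_gt hpβ)
      · exact h
    have ha1 : a ≤ 1 := by
      have : 0 ≤ ∑ β ∈ Finset.univ.filter (fun β => ¬ z β < p β), p β :=
        Finset.sum_nonneg (fun β _ => hp β)
      rw [hpA] at this; linarith
    have := pinsker_bin hbpos hlt ha1
    nlinarith [this, hkl]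

/-- **Expected population risk bound for the KL-regularized (Gibbs) randomized predictor.**
Let `B` be a finite nonempty set, `Rhat, R : B → ℝ`, `z` a probability vector on `B`, and
`lam > 0`. If `θhat` minimizes `θ ↦ Σ_β θ(β)·Rhat(β) + lam·D_KL(θ, z)` over probability
vectors on `B`, then for every probability vector `θ` with `D_KL(θ, z) < ∞` (i.e. `θ`
absolutely continuous w.r.t. `z`):
`Σ_β θhat(β)·R(β) − Σ_β θ(β)·R(β) ≤ (1/lam)·(max_β |Rhat(β) − R(β)|)² + 2·lam·D_KL(θ, z)`. -/
theorem gibbs_expected_risk_bound {B : Type*} [Fintype B] [Nonempty B]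
    (Rhat R : B → ℝ) (z : B → ℝ)
    (hz_nonneg : ∀ β, 0 ≤ z β) (hz_sum : ∑ β, z β = 1)
    (lam : ℝ) (hlam : 0 < lam)
    (θhat : B → ℝ) (hθhat_nonneg : ∀ β, 0 ≤ θhat β) (hθhat_sum : ∑ β, θhat β = 1)
    (hθhat_ac : ∀ β, z β = 0 → θhat β = 0)
    (hmin : ∀ p : B → ℝ, (∀ β, 0 ≤ p β) → ∑ β, p β = 1 → (∀ β, z β = 0 → p β = 0) →
      (∑ β, θhat β * Rhat β) + lam * klFin θhat z ≤ (∑ β, p β * Rhat β) + lam * klFin p z)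
    (θ : B → ℝ) (hθ_nonneg : ∀ β, 0 ≤ θ β) (hθ_sum : ∑ β, θ β = 1)
    (hθ_ac : ∀ β, z β = 0 → θ β = 0) :
    (∑ β, θhat β * R β) - (∑ β, θ β * R β) ≤
      1 / lam * (⨆ β, |Rhat β - R β|) ^ 2 + 2 * lam * klFin θ z := by
  set T := ⨆ β, |Rhat β - R β| with hT
  have hTb : ∀ β, |Rhat β - R β| ≤ T :=
    fun β => le_ciSup (f := fun β => |Rhat β - R β|) (Set.Finite.bddAbove (Set.finite_range _)) β
  have hT0 : 0 ≤ T := le_trans (abs_nonneg _) (hTb (Classical.arbitrary B))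
  set K := klFin θ z with hK
  set Kh := klFin θhat z with hKh
  set L := ∑ β, |θ β - z β| with hLdef
  set Lh := ∑ β, |θhat β - z β| with hLhdef
  have hL0 : 0 ≤ L := Finset.sum_nonneg (fun β _ => abs_nonneg _)
  have hLh0 : 0 ≤ Lh := Finset.sum_nonneg (fun β _ => abs_nonneg _)
  have hP : L^2 ≤ 2*K := pinsker_fin θ z hθ_nonneg hθ_sum hz_nonneg hz_sum hθ_ac
  have hPh : Lh^2 ≤ 2*Kh := pinsker_fin θhat z hθhat_nonneg hθhat_sum hz_nonneg hz_sum hθhat_ac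
  have hminθ := hmin θ hθ_nonneg hθ_sum hθ_ac
  have expand : (∑ β, θhat β * R β) - (∑ β, θ β * R β) =
      (∑ β, (θhat β - θ β) * (R β - Rhat β)) +
        ((∑ β, θhat β * Rhat β) - (∑ β, θ β * Rhat β)) := by
    rw [← Finset.sum_sub_distrib, ← Finset.sum_sub_distrib, ← Finset.sum_add_distrib]
    exact Finset.sum_congr rfl (fun β _ => by ring)
  have hcross : (∑ β, (θhat β - θ β) * (R β - Rhat β)) ≤ (Lh + L) * T := by
    calc (∑ β, (θhat β - θ β) * (R β - Rhat β))
        ≤ ∑ β, (|θhat β - z β| + |θ β - z β|) * T := by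
          apply Finset.sum_le_sum
          intro β _
          calc (θhat β - θ β) * (R β - Rhat β)
              ≤ |(θhat β - θ β) * (R β - Rhat β)| := le_abs_self _
            _ = |θhat β - θ β| * |R β - Rhat β| := abs_mul _ _
            _ ≤ (|θhat β - z β| + |θ β - z β|) * T := by
                apply mul_le_mul _ _ (abs_nonneg _)
                  (add_nonneg (abs_nonneg _) (abs_nonneg _))
                · calc |θhat β - θ β| ≤ |θhat β - z β| + |z β - θ β| := abs_sub_le _ _ _
                    _ = |θhat β - z β| + |θ β - z β| := by rw [abs_sub_comm (z β)]
                · rw [abs_sub_comm]; exact hTb β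
      _ = (Lh + L) * T := by
          rw [← Finset.sum_mul, Finset.sum_add_distrib, ← hLhdef, ← hLdef]
  have main1 : (Lh + L) * T ≤ 1/lam * T^2 + lam * Kh + lam * K := by
    rw [← mul_le_mul_iff_right₀ hlam]
    have e : lam * (1/lam * T^2 + lam * Kh + lam * K)
        = T^2 + lam^2 * Kh + lam^2 * K := by
      field_simp
    rw [e]
    have h1 : 0 ≤ (T - lam*Lh)^2 := sq_nonneg _
    have h2 : 0 ≤ (T - lam*L)^2 := sq_nonneg _
    have h3 : lam^2 * Lh^2 ≤ lam^2 * (2*Kh) :=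
      mul_le_mul_of_nonneg_left hPh (sq_nonneg lam)
    have h4 : lam^2 * L^2 ≤ lam^2 * (2*K) :=
      mul_le_mul_of_nonneg_left hP (sq_nonneg lam)
    nlinarith [h1, h2, h3, h4]
  calc (∑ β, θhat β * R β) - (∑ β, θ β * R β)
      = (∑ β, (θhat β - θ β) * (R β - Rhat β)) +
        ((∑ β, θhat β * Rhat β) - (∑ β, θ β * Rhat β)) := expand
    _ ≤ (Lh + L) * T + (lam * K - lam * Kh) := by
        have : (∑ β, θhat β * Rhat β) - (∑ β, θ β * Rhat β) ≤ lam * K - lam * Kh := by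
          linarith [hminθ]
        linarith [hcross, this]
    _ ≤ (1/lam * T^2 + lam * Kh + lam * K) + (lam * K - lam * Kh) := by linarith [main1]
    _ = 1/lam * T^2 + 2 * lam * K := by ring
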